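/- Let μ ≥ 0, L > 0, and let f : V → ℝ be differentiable, μ-convex, with L-Lipschitz gradient and global minimizer x*. Let γ₀ > 0, x₀, v₀ ∈ V, and generate sequences by: α_k = √(γ_k/L), β_k = 1/(Lα_k), (x_{k+1} - x_k)/α_k = v_k - x_{k+1} - β_k∇f(x_k), (v_{k+1} - v_k)/α_k = (μ/γ_k)(x_{k+1} - v_{k+1}) - (1/γ_k)∇f(x_{k+1}), (γ_{k+1} - γ_k)/α_k = μ - γ_{k+1}. Define λ₀ = 1, λ_k = ∏_{i=0}^{k-1} 1/(1+α_i), L_k = f(x_k) - f(x*) + (γ_k/2)‖v_k - x*‖², R₀ = 0, R_k = (λ_k/2)·∑_{i=0}^{k-1} (α_iβ_i/λ_i)‖∇f(x_i)‖², and E_k = L_k + R_k. Then for every k ≥ 0, E_{k+1} ≤ E_k/(1 + α_k). -/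

import Mathlib

open scoped RealInnerProductSpace

lemma descent_lemma {V : Type*} [NormedAddCommGroup V] [InnerProductSpace ℝ V] [CompleteSpace V]
    (L : ℝ) (hL : 0 < L) (f : V → ℝ) (f' : V → V)
    (hdiff : ∀ z, HasGradientAt f (f' z) z)
    (hlip : ∀ z w : V, ‖f' z - f' w‖ ≤ L * ‖z - w‖) (z u : V) :
    f u ≤ f z + ⟪f' z, u - z⟫ + L / 2 * ‖u - z‖ ^ 2 := by
  set d := u - z with hd
  set ψ : ℝ → ℝ := fun t => f (z + t • d) - t * ⟪f' z, d⟫ - L / 2 * t ^ 2 * ‖d‖ ^ 2 with hψ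
  have hder : ∀ t : ℝ, HasDerivAt ψ
      (⟪f' (z + t • d), d⟫ - ⟪f' z, d⟫ - L * t * ‖d‖ ^ 2) t := by
    intro t
    have hline : HasDerivAt (fun t : ℝ => z + t • d) d t := by
      simpa using ((hasDerivAt_id t).smul_const d).const_add z
    have h1 : HasDerivAt (fun t : ℝ => f (z + t • d)) ⟪f' (z + t • d), d⟫ t := by
      have := (hdiff (z + t • d)).hasFDerivAt.comp_hasDerivAt t hline
      simp at this; exact this
    have h2 : HasDerivAt (fun t : ℝ => t * ⟪f' z, d⟫) ⟪f' z, d⟫ t := by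
      simpa using (hasDerivAt_id t).mul_const (⟪f' z, d⟫)
    have h3 : HasDerivAt (fun t : ℝ => L / 2 * t ^ 2 * ‖d‖ ^ 2) (L * t * ‖d‖ ^ 2) t := by
      have := ((hasDerivAt_pow 2 t).const_mul (L / 2)).mul_const (‖d‖ ^ 2)
      refine this.congr_deriv ?_
      ring
    exact (h1.sub h2).sub h3
  have hmono : AntitoneOn ψ (Set.Icc (0:ℝ) 1) := by
    apply antitoneOn_of_deriv_nonpos (convex_Icc 0 1)
    · exact fun t _ => (hder t).differentiableAt.continuousAt.continuousWithinAt
    · exact fun t _ => (hder t).differentiableAt.differentiableWithinAt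
    · intro t ht
      rw [interior_Icc] at ht
      rw [(hder t).deriv]
      have hip : ⟪f' (z + t • d) - f' z, d⟫ ≤ L * t * ‖d‖ ^ 2 := by
        calc ⟪f' (z + t • d) - f' z, d⟫ ≤ ‖f' (z + t • d) - f' z‖ * ‖d‖ :=
              real_inner_le_norm _ _
          _ ≤ (L * ‖(z + t • d) - z‖) * ‖d‖ :=
              mul_le_mul_of_nonneg_right (hlip _ _) (norm_nonneg d)
          _ = L * t * ‖d‖ ^ 2 := by
              rw [show z + t • d - z = t • d from by abel, norm_smul, Real.norm_eq_abs,
                abs_of_pos ht.1]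
              ring
      have hsub : ⟪f' (z + t • d), d⟫ - ⟪f' z, d⟫ = ⟪f' (z + t • d) - f' z, d⟫ := by
        rw [inner_sub_left]
      linarith
  have h01 := hmono (Set.left_mem_Icc.mpr zero_le_one) (Set.right_mem_Icc.mpr zero_le_one)
    zero_le_one
  have hψ1 : ψ 1 = f u - ⟪f' z, d⟫ - L / 2 * ‖d‖ ^ 2 := by
    simp only [hψ, one_smul, one_pow, one_mul, mul_one]
    rw [show z + d = u from by rw [hd]; abel]
  have hψ0 : ψ 0 = f z := by simp [hψ]
  rw [hψ1, hψ0] at h01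
  linarith

lemma coco_lemma {V : Type*} [NormedAddCommGroup V] [InnerProductSpace ℝ V] [CompleteSpace V]
    (L μ : ℝ) (hL : 0 < L) (f : V → ℝ) (f' : V → V)
    (hμ : 0 ≤ μ)
    (hdiff : ∀ z, HasGradientAt f (f' z) z)
    (hconv : ∀ z w : V, f z - f w - ⟪f' w, z - w⟫ ≥ μ / 2 * ‖z - w‖ ^ 2)
    (hlip : ∀ z w : V, ‖f' z - f' w‖ ≤ L * ‖z - w‖) (z w : V) :
    1 / (2 * L) * ‖f' z - f' w‖ ^ 2 ≤ f z - f w - ⟪f' w, z - w⟫ := by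
  set G := f' z - f' w with hG
  set u := z - (1 / L) • G with hu
  have hdes := descent_lemma L hL f f' hdiff hlip z u
  have hcvx : (0:ℝ) ≤ f u - f w - ⟪f' w, u - w⟫ := by
    have := hconv u w
    nlinarith [sq_nonneg ‖u - w‖, mul_nonneg hμ (sq_nonneg ‖u - w‖)]
  have h1 : u - z = -((1 / L) • G) := by rw [hu]; abel
  have e1 : ⟪f' z, G⟫ - ⟪f' w, G⟫ = ‖G‖ ^ 2 := by
    rw [← inner_sub_left, ← hG, real_inner_self_eq_norm_sq]
  have e2 : ⟪f' z, u - z⟫ = -(1 / L * ⟪f' z, G⟫) := by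
    rw [h1, inner_neg_right, real_inner_smul_right]
  have e3 : ‖u - z‖ ^ 2 = (1 / L) ^ 2 * ‖G‖ ^ 2 := by
    rw [h1, norm_neg, norm_smul, Real.norm_eq_abs, abs_of_pos (by positivity : (0:ℝ) < 1 / L)]
    ring
  have e4 : ⟪f' w, u - w⟫ = ⟪f' w, z - w⟫ - 1 / L * ⟪f' w, G⟫ := by
    rw [show u - w = (z - w) - (1 / L) • G from by rw [hu]; abel, inner_sub_right,
      real_inner_smul_right]
  have e5 : L / 2 * ((1 / L) ^ 2 * ‖G‖ ^ 2) = 1 / (2 * L) * ‖G‖ ^ 2 := by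
    field_simp
  have e6 : 1 / L * ⟪f' z, G⟫ - 1 / L * ⟪f' w, G⟫ = 1 / L * ‖G‖ ^ 2 := by
    rw [← mul_sub, e1]
  have e7 : 1 / L * ‖G‖ ^ 2 - 1 / (2 * L) * ‖G‖ ^ 2 = 1 / (2 * L) * ‖G‖ ^ 2 := by
    field_simp; ring
  rw [e2, e3, e5] at hdes
  rw [e4] at hcvx
  linarith

set_option maxHeartbeats 1000000 in
/-- One-step contraction `E_{k+1} ≤ E_k/(1+α_k)` for the explicit HNAG scheme
(Algorithm 1), with `α_k = √(γ_k/L)`, `β_k = 1/(Lα_k)`, where `E_k = L_k + R_k`,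
`L_k = f(x_k) - f(x*) + (γ_k/2)‖v_k - x*‖²` and
`R_k = (λ_k/2)∑_{i<k} (α_iβ_i/λ_i)‖∇f(x_i)‖²`. -/
theorem explicit_hnag_energy_contraction
    {V : Type*} [NormedAddCommGroup V] [InnerProductSpace ℝ V] [CompleteSpace V]
    (μ L : ℝ) (hμ : 0 ≤ μ) (hL : 0 < L) (f : V → ℝ) (f' : V → V)
    (hdiff : ∀ z, HasGradientAt f (f' z) z)
    (hconv : ∀ z w : V, f z - f w - ⟪f' w, z - w⟫ ≥ μ / 2 * ‖z - w‖ ^ 2)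
    (hlip : ∀ z w : V, ‖f' z - f' w‖ ≤ L * ‖z - w‖)
    (xstar : V) (hmin : ∀ z, f xstar ≤ f z)
    (x v : ℕ → V) (γ α β lam : ℕ → ℝ) (hγ0 : 0 < γ 0)
    (hαdef : ∀ k, α k = Real.sqrt (γ k / L)) (hβ : ∀ k, β k = 1 / (L * α k))
    (h1 : ∀ k, (α k)⁻¹ • (x (k + 1) - x k) = v k - x (k + 1) - β k • f' (x k))
    (h2 : ∀ k, (α k)⁻¹ • (v (k + 1) - v k)
        = (μ / γ k) • (x (k + 1) - v (k + 1)) - (1 / γ k) • f' (x (k + 1)))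
    (h3 : ∀ k, (γ (k + 1) - γ k) / α k = μ - γ (k + 1))
    (hlam : ∀ k, lam k = ∏ i ∈ Finset.range k, (1 + α i)⁻¹)
    (k : ℕ) :
    ((f (x (k + 1)) - f xstar + γ (k + 1) / 2 * ‖v (k + 1) - xstar‖ ^ 2)
        + lam (k + 1) / 2 * ∑ i ∈ Finset.range (k + 1),
            (α i * β i / lam i) * ‖f' (x i)‖ ^ 2)
      ≤ ((f (x k) - f xstar + γ k / 2 * ‖v k - xstar‖ ^ 2)
          + lam k / 2 * ∑ i ∈ Finset.range k,
              (α i * β i / lam i) * ‖f' (x i)‖ ^ 2) / (1 + α k) := by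
  -- positivity of γ along the sequence
  have hγpos : ∀ n, 0 < γ n := by
    intro n
    induction n with
    | zero => exact hγ0
    | succ n ih =>
      have hαn : 0 < α n := by
        rw [hαdef n]; exact Real.sqrt_pos.mpr (div_pos ih hL)
      have h3n := h3 n
      rw [div_eq_iff hαn.ne'] at h3n
      nlinarith [mul_nonneg hαn.le hμ]
  have hαnonneg : ∀ n, 0 ≤ α n := fun n => by rw [hαdef n]; exact Real.sqrt_nonneg _
  have hak : 0 < α k := by
    rw [hαdef k]; exact Real.sqrt_pos.mpr (div_pos (hγpos k) hL)
  have ha2 : α k ^ 2 = γ k / L := by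
    rw [hαdef k]; exact Real.sq_sqrt (div_pos (hγpos k) hL).le
  have hγk := hγpos k
  have hlampos : ∀ n, 0 < lam n := by
    intro n
    rw [hlam n]
    refine Finset.prod_pos fun i _ => ?_
    have := hαnonneg i
    positivity
  have h1a : (0:ℝ) < 1 + α k := by linarith
  have hab : α k * β k = 1 / L := by
    rw [hβ k]; field_simp
  -- vector equations
  have hE1 : x (k + 1) - x k = α k • (v k - x (k + 1) - β k • f' (x k)) := by
    have h := congrArg (fun z => α k • z) (h1 k)
    simpa [smul_inv_smul₀ hak.ne'] using h
  have hE2 : γ k • (v (k + 1) - v k)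
      = (α k * μ) • (x (k + 1) - v (k + 1)) - α k • f' (x (k + 1)) := by
    have h := congrArg (fun z => (γ k * α k) • z) (h2 k)
    simp only [smul_sub, smul_smul] at h
    rw [show γ k * α k * (α k)⁻¹ = γ k from by field_simp,
      show γ k * α k * (μ / γ k) = α k * μ from by field_simp <;> ring,
      show γ k * α k * (1 / γ k) = α k from by field_simp <;> ring] at h
    simp only [smul_sub]
    exact h
  have hγrel : γ (k + 1) - γ k = α k * (μ - γ (k + 1)) := by
    have := h3 k
    rw [div_eq_iff hak.ne'] at this
    linarith [this]
  -- the key one-step inequality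
  have key : (1 + α k) * (f (x (k + 1)) - f xstar
        + γ (k + 1) / 2 * ‖v (k + 1) - xstar‖ ^ 2) + 1 / (2 * L) * ‖f' (x k)‖ ^ 2
      ≤ f (x k) - f xstar + γ k / 2 * ‖v k - xstar‖ ^ 2 := by
    -- P1
    have base1 : ‖v k - xstar‖ ^ 2
        = ‖v (k + 1) - xstar‖ ^ 2 - 2 * ⟪v (k + 1) - xstar, v (k + 1) - v k⟫
          + ‖v (k + 1) - v k‖ ^ 2 := by
      have := norm_sub_sq_real (v (k + 1) - xstar) (v (k + 1) - v k)
      rw [show v (k + 1) - xstar - (v (k + 1) - v k) = v k - xstar from by abel] at this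
      linarith [this]
    have comm1 := real_inner_comm (v (k + 1) - xstar) (v (k + 1) - v k)
    have P1 : γ k / 2 * ‖v (k + 1) - xstar‖ ^ 2 - γ k / 2 * ‖v k - xstar‖ ^ 2
        = γ k * ⟪v (k + 1) - v k, v (k + 1) - xstar⟫ - γ k / 2 * ‖v (k + 1) - v k‖ ^ 2 := by
      linear_combination (- γ k / 2) * base1 - γ k * comm1
    -- P2
    have P2 : γ k * ⟪v (k + 1) - v k, v (k + 1) - xstar⟫
        = (α k * μ) * ⟪x (k + 1) - v (k + 1), v (k + 1) - xstar⟫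
          - α k * ⟪f' (x (k + 1)), v (k + 1) - xstar⟫ := by
      have h := congrArg (fun z => ⟪z, v (k + 1) - xstar⟫) hE2
      simpa [inner_sub_left, real_inner_smul_left] using h
    -- P3
    have base3 : ‖x (k + 1) - xstar‖ ^ 2 = ‖x (k + 1) - v (k + 1)‖ ^ 2
        + 2 * ⟪x (k + 1) - v (k + 1), v (k + 1) - xstar⟫ + ‖v (k + 1) - xstar‖ ^ 2 := by
      have := norm_add_sq_real (x (k + 1) - v (k + 1)) (v (k + 1) - xstar)
      rw [show x (k + 1) - v (k + 1) + (v (k + 1) - xstar) = x (k + 1) - xstar from by abel]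
        at this
      linarith [this]
    have P3 : (α k * μ) * ⟪x (k + 1) - v (k + 1), v (k + 1) - xstar⟫
        = α k * μ / 2 * ‖x (k + 1) - xstar‖ ^ 2 - α k * μ / 2 * ‖x (k + 1) - v (k + 1)‖ ^ 2
          - α k * μ / 2 * ‖v (k + 1) - xstar‖ ^ 2 := by
      linear_combination (-(α k * μ) / 2) * base3
    -- P4
    have P4 : α k * ⟪f' (x (k + 1)), v (k + 1) - xstar⟫
        = α k * ⟪f' (x (k + 1)), x (k + 1) - xstar⟫
          + α k * ⟪f' (x (k + 1)), v k - x (k + 1)⟫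
          + α k * ⟪f' (x (k + 1)), v (k + 1) - v k⟫ := by
      have : ⟪f' (x (k + 1)), v (k + 1) - xstar⟫
          = ⟪f' (x (k + 1)), (x (k + 1) - xstar) + ((v k - x (k + 1)) + (v (k + 1) - v k))⟫ := by
        rw [show (x (k + 1) - xstar) + ((v k - x (k + 1)) + (v (k + 1) - v k))
          = v (k + 1) - xstar from by abel]
      rw [inner_add_right, inner_add_right] at this
      linear_combination α k * this
    -- P5
    have hE1' : x (k + 1) - x k = α k • (v k - x (k + 1)) - (1 / L) • f' (x k) := by
      rw [hE1, smul_sub, smul_smul, hab]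
    have P5 : α k * ⟪f' (x (k + 1)), v k - x (k + 1)⟫
        = ⟪f' (x (k + 1)), x (k + 1) - x k⟫ + 1 / L * ⟪f' (x (k + 1)), f' (x k)⟫ := by
      have h := congrArg (fun z => (inner ℝ (f' (x (k + 1))) z : ℝ)) hE1'
      simp only [inner_sub_right, real_inner_smul_right] at h
      simp only [inner_sub_right]
      linarith [h]
    -- P6 Young
    have P6 : 0 ≤ γ k / 2 * ‖v (k + 1) - v k‖ ^ 2
        + α k * ⟪f' (x (k + 1)), v (k + 1) - v k⟫ + 1 / (2 * L) * ‖f' (x (k + 1))‖ ^ 2 := by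
      have hyeq : 2 * γ k * (γ k / 2 * ‖v (k + 1) - v k‖ ^ 2
            + α k * ⟪f' (x (k + 1)), v (k + 1) - v k⟫ + 1 / (2 * L) * ‖f' (x (k + 1))‖ ^ 2)
          = ‖γ k • (v (k + 1) - v k) + α k • f' (x (k + 1))‖ ^ 2 := by
        rw [norm_add_sq_real, norm_smul, norm_smul, real_inner_smul_left, real_inner_smul_right,
          Real.norm_eq_abs, Real.norm_eq_abs, abs_of_pos hγk, abs_of_pos hak]
        linear_combination (-(2 * γ k * α k)) *
            real_inner_comm (f' (x (k + 1))) (v (k + 1) - v k)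
          - ‖f' (x (k + 1))‖ ^ 2 * ha2
      have h0 : (0:ℝ) ≤ ‖γ k • (v (k + 1) - v k) + α k • f' (x (k + 1))‖ ^ 2 := by positivity
      rw [← hyeq] at h0
      have h2γ : (0:ℝ) < 2 * γ k := by linarith
      rw [show (2 * γ k * (γ k / 2 * ‖v (k + 1) - v k‖ ^ 2
          + α k * ⟪f' (x (k + 1)), v (k + 1) - v k⟫
          + 1 / (2 * L) * ‖f' (x (k + 1))‖ ^ 2)) = (2 * γ k) * (γ k / 2 * ‖v (k + 1) - v k‖ ^ 2
          + α k * ⟪f' (x (k + 1)), v (k + 1) - v k⟫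
          + 1 / (2 * L) * ‖f' (x (k + 1))‖ ^ 2) from by ring] at h0
      exact (mul_nonneg_iff_of_pos_left h2γ).mp h0
    -- P7 strong convexity at minimizer
    have hB' : μ / 2 * ‖x (k + 1) - xstar‖ ^ 2
        ≤ f xstar - f (x (k + 1)) + ⟪f' (x (k + 1)), x (k + 1) - xstar⟫ := by
      have h := hconv xstar (x (k + 1))
      rw [show xstar - x (k + 1) = -(x (k + 1) - xstar) from by abel, inner_neg_right,
        norm_neg] at h
      linarith
    have P7 := mul_le_mul_of_nonneg_left hB' hak.le
    -- P8 cocoercivity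
    have P8 := coco_lemma L μ hL f f' hμ hdiff hconv hlip (x k) (x (k + 1))
    have c8 : ⟪f' (x (k + 1)), x k - x (k + 1)⟫
        = -⟪f' (x (k + 1)), x (k + 1) - x k⟫ := by
      rw [show x k - x (k + 1) = -(x (k + 1) - x k) from by abel, inner_neg_right]
    rw [c8] at P8
    -- P9
    have P9 : γ (k + 1) / 2 * ‖v (k + 1) - xstar‖ ^ 2
        + α k * (γ (k + 1) / 2 * ‖v (k + 1) - xstar‖ ^ 2)
        = γ k / 2 * ‖v (k + 1) - xstar‖ ^ 2 + α k * μ / 2 * ‖v (k + 1) - xstar‖ ^ 2 := by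
      linear_combination (‖v (k + 1) - xstar‖ ^ 2 / 2) * hγrel
    -- P10
    have P10 : ‖f' (x k) - f' (x (k + 1))‖ ^ 2
        = ‖f' (x k)‖ ^ 2 - 2 * ⟪f' (x (k + 1)), f' (x k)⟫ + ‖f' (x (k + 1))‖ ^ 2 := by
      rw [norm_sub_sq_real, real_inner_comm]
    -- P11
    have P11 : 0 ≤ α k * μ / 2 * ‖x (k + 1) - v (k + 1)‖ ^ 2 := by positivity
    rw [P10] at P8
    have hL2 : 1 / L = 2 * (1 / (2 * L)) := by ring
    rw [hL2] at P5
    linarith [P1, P2, P3, P4, P5, P6, P7, P8, P9, P11]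
  -- reduce the stated goal to `key`
  rw [le_div_iff₀ h1a]
  have hlamsucc : lam (k + 1) = lam k * (1 + α k)⁻¹ := by
    rw [hlam (k + 1), Finset.prod_range_succ, ← hlam k]
  set S := ∑ i ∈ Finset.range k, (α i * β i / lam i) * ‖f' (x i)‖ ^ 2 with hS
  have hq : lam (k + 1) / 2 * (∑ i ∈ Finset.range (k + 1),
        (α i * β i / lam i) * ‖f' (x i)‖ ^ 2) * (1 + α k)
      = lam k / 2 * S + 1 / (2 * L) * ‖f' (x k)‖ ^ 2 := by
    rw [Finset.sum_range_succ, hab, ← hS, hlamsucc]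
    field_simp [(hlampos k).ne', hL.ne', h1a.ne']
  linarith [key, hq]
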